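/- Let r₀, r₁, r₂, r₃, r₄ > 0 and ρ₀, ρ₁, ρ₂, ρ₃, ρ₄ > 0 satisfy ∑_{j=1}^4 arctan(r_j/r₀) = π and ∑_{j=1}^4 arctan(ρ_j/ρ₀) = π (the closing conditions for two orthogonal circle patterns for SG(1,0), a central circle orthogonally intersected by four neighbors). Set c_j = ((ρ_j/ρ₀) + (ρ₀/ρ_j))⁻¹ for j = 1, …, 4. Then ∑_{j=1}^4 c_j·(r_j/ρ_j) ≥ (r₀/ρ₀)·∑_{j=1}^4 c_j and ∑_{j=1}^4 c_j·(ρ_j/r_j) ≥ (ρ₀/r₀)·∑_{j=1}^4 c_j. (Thus the quotient of the radius functions of two orthogonal SG-circle patterns is subharmonic with respect to the conductances c_j.) -/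

import Mathlib

open Real

/-- `arctan t ≤ t` for `0 ≤ t`. -/
lemma arctan_le_self' {t : ℝ} (ht : 0 ≤ t) : Real.arctan t ≤ t := by
  have h1 : 0 ≤ Real.arctan t := by
    rw [← Real.arctan_zero]
    exact Real.arctan_strictMono.monotone ht
  have := Real.le_tan h1 (Real.arctan_lt_pi_div_two t)
  rwa [Real.tan_arctan] at this

/-- `t/(1+t²) ≤ arctan t` for `0 ≤ t`. -/
lemma div_le_arctan {t : ℝ} (ht : 0 ≤ t) : t / (1 + t ^ 2) ≤ Real.arctan t := by
  have h1 : 0 ≤ Real.arctan t := by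
    rw [← Real.arctan_zero]; exact Real.arctan_strictMono.monotone ht
  have hsin : Real.sin (Real.arctan t) ≤ Real.arctan t := Real.sin_le h1
  rw [Real.sin_arctan] at hsin
  refine le_trans ?_ hsin
  have hs : Real.sqrt (1 + t ^ 2) ≤ 1 + t ^ 2 := by
    nlinarith [Real.sq_sqrt (by positivity : (0:ℝ) ≤ 1 + t ^ 2),
      Real.sqrt_nonneg (1 + t ^ 2), Real.one_le_sqrt.mpr (by nlinarith : (1:ℝ) ≤ 1 + t ^ 2)]
  have h2 : (0:ℝ) < Real.sqrt (1 + t ^ 2) := Real.sqrt_pos.mpr (by positivity)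
  exact div_le_div_of_nonneg_left ht h2 hs

/-- Tangent line inequality for the concave function arctan on positives. -/
lemma arctan_tangent {x y : ℝ} (hx : 0 < x) (hy : 0 < y) :
    Real.arctan x ≤ Real.arctan y + (x - y) / (1 + y ^ 2) := by
  have hxy : (0:ℝ) < 1 + x * y := by positivity
  have hadd : Real.arctan x + Real.arctan (-y) =
      Real.arctan ((x + -y) / (1 - x * (-y))) := by
    apply Real.arctan_add
    nlinarith
  rw [Real.arctan_neg] at hadd
  set t : ℝ := (x - y) / (1 + x * y) with ht
  have hteq : Real.arctan x = Real.arctan y + Real.arctan t := by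
    have : (x + -y) / (1 - x * (-y)) = t := by rw [ht]; ring_nf
    rw [this] at hadd
    linarith
  rw [hteq]
  gcongr Real.arctan y + ?_
  rcases le_total y x with h | h
  · -- t ≥ 0, arctan t ≤ t ≤ (x-y)/(1+y²)
    have ht0 : 0 ≤ t := by
      apply div_nonneg <;> nlinarith
    refine (arctan_le_self' ht0).trans ?_
    rw [ht, div_le_div_iff₀ (by positivity) (by positivity)]
    nlinarith [mul_nonneg hy.le (sq_nonneg (x - y))]
  · -- t ≤ 0, arctan t ≤ t/(1+t²) ≤ (x-y)/(1+y²)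
    have ht0 : t ≤ 0 := by
      apply div_nonpos_of_nonpos_of_nonneg <;> nlinarith
    have h1 : Real.arctan t ≤ t / (1 + t ^ 2) := by
      have := div_le_arctan (t := -t) (by linarith)
      rw [Real.arctan_neg] at this
      have h2 : -t / (1 + (-t) ^ 2) ≤ -Real.arctan t := this
      rw [neg_div] at h2
      simp only [neg_neg, even_two, Even.neg_pow] at h2 ⊢
      linarith
    refine h1.trans ?_
    have hden : (0:ℝ) < 1 + t ^ 2 := by positivity
    rw [div_le_div_iff₀ hden (by positivity)]
    have hts : t * (1 + x * y) = x - y := by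
      rw [ht]; field_simp
    have hBB : (1 + x * y) * (1 + t ^ 2) ≤ 1 + y ^ 2 := by
      nlinarith [mul_self_nonneg (t * (1 + x * y)), hts,
        mul_nonneg (mul_nonneg hx.le (by positivity : (0:ℝ) ≤ 1 + y ^ 2)) (by linarith : 0 ≤ y - x)]
    have hts2 : t * (1 + x * y) * (1 + t ^ 2) = (x - y) * (1 + t ^ 2) := by rw [hts]
    nlinarith [mul_le_mul_of_nonneg_left hBB (neg_nonneg.mpr ht0)]

/-- Key convexity lemma: if two positive 4-tuples have equal arctan sums, then the
weighted difference sum is nonnegative. -/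
lemma key_sum {x y : Fin 4 → ℝ} (hx : ∀ j, 0 < x j) (hy : ∀ j, 0 < y j)
    (h : ∑ j, Real.arctan (x j) = ∑ j, Real.arctan (y j)) :
    0 ≤ ∑ j, (x j - y j) / (1 + (y j) ^ 2) := by
  have hle : ∑ j, Real.arctan (x j) ≤
      ∑ j, (Real.arctan (y j) + (x j - y j) / (1 + (y j) ^ 2)) :=
    Finset.sum_le_sum fun j _ => arctan_tangent (hx j) (hy j)
  rw [Finset.sum_add_distrib, h] at hle
  linarith

theorem orthogonal_subharmonicity
    (r ρ : Fin 4 → ℝ) (r₀ ρ₀ : ℝ)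
    (hr₀ : 0 < r₀) (hρ₀ : 0 < ρ₀) (hr : ∀ j, 0 < r j) (hρ : ∀ j, 0 < ρ j)
    (hcloser : ∑ j, Real.arctan (r j / r₀) = Real.pi)
    (hcloseρ : ∑ j, Real.arctan (ρ j / ρ₀) = Real.pi)
    (c : Fin 4 → ℝ) (hc : ∀ j, c j = (ρ j / ρ₀ + ρ₀ / ρ j)⁻¹) :
    (∑ j, c j * (r j / ρ j) ≥ r₀ / ρ₀ * ∑ j, c j) ∧
    (∑ j, c j * (ρ j / r j) ≥ ρ₀ / r₀ * ∑ j, c j) := by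
  set x : Fin 4 → ℝ := fun j => r j / r₀ with hxdef
  set y : Fin 4 → ℝ := fun j => ρ j / ρ₀ with hydef
  have hx : ∀ j, 0 < x j := fun j => div_pos (hr j) hr₀
  have hy : ∀ j, 0 < y j := fun j => div_pos (hρ j) hρ₀
  have hcy : ∀ j, c j = y j / (1 + (y j) ^ 2) := by
    intro j
    have h1 : ρ j ≠ 0 := (hρ j).ne'
    have h2 : ρ₀ ≠ 0 := hρ₀.ne'
    have hyj : y j = ρ j / ρ₀ := rfl
    rw [hc j, hyj]
    rw [inv_eq_iff_eq_inv]
    field_simp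
    ring
  constructor
  · -- first inequality
    have hkey : 0 ≤ ∑ j, (x j - y j) / (1 + (y j) ^ 2) :=
      key_sum hx hy (by rw [hcloser, hcloseρ])
    have heq : ∀ j, c j * (r j / ρ j) - r₀ / ρ₀ * c j
        = (r₀ / ρ₀) * ((x j - y j) / (1 + (y j) ^ 2)) := by
      intro j
      rw [hcy j]
      have h1 : ρ j ≠ 0 := (hρ j).ne'
      have h2 : ρ₀ ≠ 0 := hρ₀.ne'
      have h3 : r₀ ≠ 0 := hr₀.ne'
      have h4 : (1 : ℝ) + (y j)^2 ≠ 0 := by positivity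
      simp only [hxdef, hydef]
      field_simp
    have : 0 ≤ ∑ j, (c j * (r j / ρ j) - r₀ / ρ₀ * c j) := by
      rw [Finset.sum_congr rfl (fun j _ => heq j), ← Finset.mul_sum]
      positivity
    rw [Finset.sum_sub_distrib, ← Finset.mul_sum] at this
    linarith
  · -- second inequality: use inverse closing conditions
    have hinvr : ∑ j, Real.arctan ((x j)⁻¹) = Real.pi := by
      have : ∀ j : Fin 4, Real.arctan ((x j)⁻¹) = Real.pi / 2 - Real.arctan (x j) :=
        fun j => Real.arctan_inv_of_pos (hx j)
      rw [Finset.sum_congr rfl (fun j _ => this j), Finset.sum_sub_distrib, hcloser]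
      simp
      ring
    have hinvρ : ∑ j, Real.arctan ((y j)⁻¹) = Real.pi := by
      have : ∀ j : Fin 4, Real.arctan ((y j)⁻¹) = Real.pi / 2 - Real.arctan (y j) :=
        fun j => Real.arctan_inv_of_pos (hy j)
      rw [Finset.sum_congr rfl (fun j _ => this j), Finset.sum_sub_distrib, hcloseρ]
      simp
      ring
    have hkey : 0 ≤ ∑ j, ((x j)⁻¹ - (y j)⁻¹) / (1 + ((y j)⁻¹) ^ 2) :=
      key_sum (fun j => inv_pos.mpr (hx j)) (fun j => inv_pos.mpr (hy j))
        (by rw [hinvr, hinvρ])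
    have heq : ∀ j, c j * (ρ j / r j) - ρ₀ / r₀ * c j
        = (ρ₀ / r₀) * (((x j)⁻¹ - (y j)⁻¹) / (1 + ((y j)⁻¹) ^ 2)) := by
      intro j
      rw [hcy j]
      have h1 : ρ j ≠ 0 := (hρ j).ne'
      have h2 : ρ₀ ≠ 0 := hρ₀.ne'
      have h3 : r₀ ≠ 0 := hr₀.ne'
      have h5 : r j ≠ 0 := (hr j).ne'
      have hy0 : y j ≠ 0 := (hy j).ne'
      have hx0 : x j ≠ 0 := (hx j).ne'
      have h4 : (1 : ℝ) + (y j)^2 ≠ 0 := by positivity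
      simp only [hxdef, hydef]
      field_simp
      ring
    have : 0 ≤ ∑ j, (c j * (ρ j / r j) - ρ₀ / r₀ * c j) := by
      rw [Finset.sum_congr rfl (fun j _ => heq j), ← Finset.mul_sum]
      positivity
    rw [Finset.sum_sub_distrib, ← Finset.mul_sum] at this
    linarith
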